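/- arXiv:1708.01977 — 3 statements merged into one kernel-verified Lean document; each statement's English description precedes it below -/
import Mathlib

section
/- Consider two independent Bernoulli random variables X1 ~ Bernoulli(μ1) and X2 ~ Bernoulli(μ2). Draw one sample from each at rounds 1 and 2, and at round 3 draw a second sample from the distribution whose first sample is larger (choosing distribution 1 in case of a tie). Let M1 be the average of all samples drawn from distribution 1 by round 3. Then E[M1] − μ1 = −(1/2)·μ1·(1−μ1)·μ2. -/
/-- Three-round greedy with two Bernoulli arms: the expected sample mean of arm 1
(which receives a second sample at round 3 exactly when its first sample is at least
the first sample of arm 2, ties going to arm 1) is negatively biased, with bias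
`-(1/2) * μ1 * (1 - μ1) * μ2`. -/
theorem bias_arm1_three_round_greedy (μ1 μ2 : ℝ)
    (h1 : μ1 ∈ Set.Icc (0:ℝ) 1) (h2 : μ2 ∈ Set.Icc (0:ℝ) 1) :
    (∑ b1 : Bool, ∑ b2 : Bool, ∑ z : Bool,
        ((if b1 then μ1 else 1 - μ1) * (if b2 then μ2 else 1 - μ2) *
          (if z then μ1 else 1 - μ1)) *
        (if b1 = true ∨ b2 = false then
            (((if b1 then (1:ℝ) else 0) + (if z then (1:ℝ) else 0)) / 2)
          else (if b1 then (1:ℝ) else 0))) - μ1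
      = -(1/2) * μ1 * (1 - μ1) * μ2 := by
  simp [Fintype.sum_bool]; ring
end

section
/- Consider two independent Bernoulli random variables X1 ~ Bernoulli(μ1) and X2 ~ Bernoulli(μ2). Draw one sample from each at rounds 1 and 2, and at round 3 draw a second sample from the distribution whose first sample is larger (choosing distribution 1 in case of a tie). Let M2 be the average of all samples drawn from distribution 2 by round 3. Then E[M2] − μ2 = −(1/2)·μ2·(1−μ2)·(1−μ1). -/
/-- Three-round greedy with two Bernoulli arms: the expected sample mean of arm 2
(which receives a second sample at round 3 exactly when its first sample strictly
exceeds the first sample of arm 1, ties going to arm 1) is negatively biased, with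
bias `-(1/2) * μ2 * (1 - μ2) * (1 - μ1)`. -/
theorem bias_arm2_three_round_greedy (μ1 μ2 : ℝ)
    (h1 : μ1 ∈ Set.Icc (0:ℝ) 1) (h2 : μ2 ∈ Set.Icc (0:ℝ) 1) :
    (∑ b1 : Bool, ∑ b2 : Bool, ∑ z : Bool,
        ((if b1 then μ1 else 1 - μ1) * (if b2 then μ2 else 1 - μ2) *
          (if z then μ2 else 1 - μ2)) *
        (if b2 = true ∧ b1 = false then
            (((if b2 then (1:ℝ) else 0) + (if z then (1:ℝ) else 0)) / 2)
          else (if b2 then (1:ℝ) else 0))) - μ2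
      = -(1/2) * μ2 * (1 - μ2) * (1 - μ1) := by
  simp [Fintype.sum_bool]
  ring
end

section
/- Negative bias under Exploit for a single arm against a fixed environment: Fix a deterministic mapping S that, for every finite sequence of real sample values σ = (σ_1, …, σ_T) of arm 1, outputs the number n_σ ∈ {1,…,T} of samples of arm 1 collected by horizon T, where for each i the decision of whether the i-th sample is collected by time T depends only on (σ_1,…,σ_{i−1}). Suppose S satisfies the Exploit property: for any l, if two prefixes agree in the first l−1 coordinates and one has a larger l-th coordinate, then the one with larger l-th coordinate has at least as many total collected samples, and the monotonicity condition from the proof holds (sample-pathwise the stopping structure from Exploit). If σ_1, σ_2, … are i.i.d. with finite mean μ, then E[(σ_1 + ⋯ + σ_{n_σ})/n_σ] ≤ μ. -/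
open MeasureTheory ProbabilityTheory

namespace ExploitNegAux

open Set


/-- One-dimensional Harris inequality. -/
lemma harris_one_dim (ν : Measure ℝ) [IsProbabilityMeasure ν] {μ : ℝ}
    (hint : Integrable (fun t : ℝ => t) ν) (hmean : ∫ t, t ∂ν = μ)
    {φ : ℝ → ℝ} (hmono : Monotone φ) (h0 : ∀ t, 0 ≤ φ t) (h1 : ∀ t, φ t ≤ 1) :
    0 ≤ ∫ t, φ t * (t - μ) ∂ν := by
  have hφm : Measurable φ := hmono.measurable
  have hi : Integrable (fun t : ℝ => t - μ) ν := hint.sub (integrable_const μ)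
  have hiφ : Integrable (fun t => φ t * (t - μ)) ν :=
    hi.bdd_mul (c := 1) hφm.aestronglyMeasurable (Filter.Eventually.of_forall fun t => by
      rw [Real.norm_eq_abs, abs_le]; constructor <;> [linarith [h0 t]; exact h1 t])
  have hiψ : Integrable (fun t => φ μ * (t - μ)) ν := hi.const_mul _
  have hle : ∀ t, φ μ * (t - μ) ≤ φ t * (t - μ) := by
    intro t
    rcases le_total μ t with h | h
    · nlinarith [hmono h]
    · nlinarith [hmono h]
  calc (0:ℝ) = φ μ * ∫ t, (t - μ) ∂ν := by
        rw [integral_sub hint (integrable_const μ), hmean, integral_const]; simp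
    _ = ∫ t, φ μ * (t - μ) ∂ν := (integral_const_mul _ _).symm
    _ ≤ ∫ t, φ t * (t - μ) ∂ν := integral_mono hiψ hiφ hle

lemma inner_ray (ν : Measure ℝ) [IsProbabilityMeasure ν] {μ : ℝ}
    (hint : Integrable (fun t : ℝ => t) ν) (hmean : ∫ t, t ∂ν = μ)
    {s r : Set ℝ}
    (hr : ∀ t t' : ℝ, t ≤ t' → t ∈ r → t' ∈ r)
    (hae : s =ᵐ[ν] r) :
    0 ≤ ∫ t, s.indicator (fun _ => (1:ℝ)) t * (t - μ) ∂ν := by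
  have hcongr : ∫ t, s.indicator (fun _ => (1:ℝ)) t * (t - μ) ∂ν
      = ∫ t, r.indicator (fun _ => (1:ℝ)) t * (t - μ) ∂ν := by
    apply integral_congr_ae
    filter_upwards [hae] with t ht
    have hts : (t ∈ s) = (t ∈ r) := ht
    by_cases h : t ∈ s
    · simp [Set.indicator, h, hts ▸ h]
    · have h2 : t ∉ r := fun hh => h (hts ▸ hh)
      simp [Set.indicator, h, h2]
  rw [hcongr]
  refine harris_one_dim ν hint hmean (φ := r.indicator fun _ => (1:ℝ)) ?_ ?_ ?_
  · intro a b hab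
    by_cases ha : a ∈ r
    · simp [Set.indicator, ha, hr a b hab ha]
    · simp only [Set.indicator, ha, if_false]
      by_cases hb : b ∈ r <;> simp [hb]
  · intro t; exact Set.indicator_nonneg (fun _ _ => zero_le_one) t
  · intro t; by_cases h : t ∈ r <;> simp [Set.indicator, h]

lemma inner_const (ν : Measure ℝ) [IsProbabilityMeasure ν] {μ : ℝ}
    (hint : Integrable (fun t : ℝ => t) ν) (hmean : ∫ t, t ∂ν = μ)
    {s r : Set ℝ} (hr : r = ∅ ∨ r = Set.univ) (hae : s =ᵐ[ν] r) :
    ∫ t, s.indicator (fun _ => (1:ℝ)) t * (t - μ) ∂ν = 0 := by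
  have hcongr : ∫ t, s.indicator (fun _ => (1:ℝ)) t * (t - μ) ∂ν
      = ∫ t, r.indicator (fun _ => (1:ℝ)) t * (t - μ) ∂ν := by
    apply integral_congr_ae
    filter_upwards [hae] with t ht
    have hts : (t ∈ s) = (t ∈ r) := ht
    by_cases h : t ∈ s
    · simp [Set.indicator, h, hts ▸ h]
    · have h2 : t ∉ r := fun hh => h (hts ▸ hh)
      simp [Set.indicator, h, h2]
  rw [hcongr]
  rcases hr with rfl | rfl
  · simp
  · simp only [Set.indicator_univ]
    simp only [one_mul]
    rw [integral_sub hint (integrable_const μ), hmean, integral_const]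
    simp



theorem nullMeasurableSet_upper :
    ∀ (k : ℕ) (ν : Measure ℝ), IsProbabilityMeasure ν → ∀ (U : Set (Fin k → ℝ)),
      (∀ x y : Fin k → ℝ, (∀ i, x i ≤ y i) → x ∈ U → y ∈ U) →
      NullMeasurableSet U (Measure.pi fun _ => ν) := by
  intro k
  induction k with
  | zero =>
    intro ν hν U _
    rcases Set.eq_empty_or_nonempty U with rfl | ⟨z, hz⟩
    · exact MeasurableSet.empty.nullMeasurableSet
    · have hu : U = Set.univ := Set.eq_univ_of_forall fun x => by
        have hx : x = z := funext fun i => i.elim0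
        rwa [hx]
      rw [hu]; exact MeasurableSet.univ.nullMeasurableSet
  | succ k ih =>
    intro ν hν U hU
    classical
    set π : Measure (Fin k → ℝ) := Measure.pi fun _ => ν with hπdef
    have _ : IsProbabilityMeasure π := by infer_instance
    -- the equivalence splitting off the last coordinate, rest first
    set e := MeasurableEquiv.piFinSuccAbove (fun _ : Fin (k+1) => ℝ) (Fin.last k) with hedef
    set E := e.trans (MeasurableEquiv.prodComm : ℝ × (Fin k → ℝ) ≃ᵐ (Fin k → ℝ) × ℝ) with hEdef
    have mpswap : MeasurePreserving Prod.swap (ν.prod π) (π.prod ν) :=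
      ⟨measurable_swap, Measure.prod_swap⟩
    have mpE : MeasurePreserving E (Measure.pi fun _ : Fin (k+1) => ν) (π.prod ν) :=
      (measurePreserving_piFinSuccAbove (fun _ : Fin (k+1) => ν) (Fin.last k)).trans mpswap
    set ins : (Fin k → ℝ) → ℝ → (Fin (k+1) → ℝ) := fun y t => (Fin.last k).insertNth t y
      with hinsdef
    have hins_mono : ∀ (y y' : Fin k → ℝ) (t t' : ℝ), (∀ i, y i ≤ y' i) → t ≤ t' →
        ∀ j, ins y t j ≤ ins y' t' j := by
      intro y y' t t' hy ht j
      refine Fin.lastCases ?_ ?_ j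
      · simpa [ins, Fin.insertNth_apply_same] using ht
      · intro j
        rw [hinsdef]
        simp only [← Fin.succAbove_last, Fin.insertNth_apply_succAbove]
        exact hy j
    set U'' : Set ((Fin k → ℝ) × ℝ) := {p | ins p.1 p.2 ∈ U} with hU''def
    -- sections
    set V : ℝ → Set (Fin k → ℝ) := fun c => {y | ins y c ∈ U} with hVdef
    have hVnm : ∀ c, NullMeasurableSet (V c) π := by
      intro c
      exact ih ν hν (V c) (fun x y hxy hx => hU _ _ (hins_mono x y c c hxy le_rfl) hx)
    have hVex : ∀ c : ℝ, ∃ Wc : Set (Fin k → ℝ), MeasurableSet Wc ∧ V c =ᵐ[π] Wc := by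
      intro c; obtain ⟨Wc, h1, h2⟩ := hVnm c; exact ⟨Wc, h1, h2⟩
    choose W hWm hWe using hVex
    set g : (Fin k → ℝ) → EReal :=
      fun y => ⨅ q : ℚ, (if y ∈ W (q:ℝ) then ((q:ℝ):EReal) else ⊤) with hgdef
    have hg : Measurable g :=
      Measurable.iInf fun q => Measurable.ite (hWm _) measurable_const measurable_const
    set D : Set ℝ := {c | ν {c} ≠ 0} with hDdef
    have hD : D.Countable := by
      have h := Measure.countable_meas_level_set_pos (μ := ν) measurable_id
      refine h.mono fun c hc => ?_
      simp only [mem_setOf_eq] at hc ⊢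
      have hs : {a : ℝ | id a = c} = {c} := by ext a; simp
      rw [hs]
      exact pos_iff_ne_zero.2 hc
    set B : Set ((Fin k → ℝ) × ℝ) :=
      {p | g p.1 < ((p.2 : ℝ) : EReal)} ∪
        ⋃ c ∈ D, (W c ∩ {y | g y = ((c:ℝ):EReal)}) ×ˢ ({c} : Set ℝ) with hBdef
    have hBmeas : MeasurableSet B := by
      refine MeasurableSet.union ?_ ?_
      · exact measurableSet_lt (hg.comp measurable_fst)
          (measurable_coe_real_ereal.comp measurable_snd)
      · exact MeasurableSet.biUnion hD fun c _ =>
          ((hWm c).inter (hg (measurableSet_singleton _))).prod (measurableSet_singleton c)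
    set good : Set (Fin k → ℝ) :=
      {y | (∀ q : ℚ, (y ∈ V (q:ℝ) ↔ y ∈ W (q:ℝ))) ∧ ∀ c ∈ D, (y ∈ V c ↔ y ∈ W c)} with hgooddef
    have hgood : ∀ᵐ y ∂π, y ∈ good := by
      have h1 : ∀ᵐ y ∂π, ∀ q : ℚ, (y ∈ V (q:ℝ) ↔ y ∈ W (q:ℝ)) := by
        rw [ae_all_iff]
        intro q
        filter_upwards [hWe (q:ℝ)] with y hy
        exact iff_of_eq hy
      have h2 : ∀ᵐ y ∂π, ∀ c ∈ D, (y ∈ V c ↔ y ∈ W c) := by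
        rw [ae_ball_iff hD]
        intro c _
        filter_upwards [hWe c] with y hy
        exact iff_of_eq hy
      filter_upwards [h1, h2] with y hy1 hy2
      exact ⟨hy1, hy2⟩
    -- main pointwise claim
    have hmain : ∀ y ∈ good, ∀ t : ℝ,
        (((y, t) ∈ U'') ↔ ((y, t) ∈ B)) ∨ (((t:ℝ):EReal) = g y ∧ t ∉ D) := by
      intro y hy t
      have gW : ∀ q : ℚ, y ∈ W (q:ℝ) ↔ ins y (q:ℝ) ∈ U := fun q => (hy.1 q).symm
      have glt : ∀ t' : ℝ, g y < (t':EReal) ↔ ∃ q : ℚ, (q:ℝ) < t' ∧ ins y (q:ℝ) ∈ U := by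
        intro t'
        rw [hgdef, iInf_lt_iff]
        constructor
        · rintro ⟨q, hq⟩
          by_cases hw : y ∈ W (q:ℝ)
          · rw [if_pos hw] at hq
            exact ⟨q, by exact_mod_cast hq, (gW q).1 hw⟩
          · rw [if_neg hw] at hq
            exact absurd hq not_top_lt
        · rintro ⟨q, hq1, hq2⟩
          refine ⟨q, ?_⟩
          rw [if_pos ((gW q).2 hq2)]
          exact_mod_cast hq1
      by_cases hlt : g y < (t:EReal)
      · left
        have hUm : (y, t) ∈ U'' := by
          obtain ⟨q, hq1, hq2⟩ := (glt t).1 hlt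
          exact hU _ _ (hins_mono y y (q:ℝ) t (fun i => le_rfl) hq1.le) hq2
        exact ⟨fun _ => Or.inl hlt, fun _ => hUm⟩
      · by_cases hsec : ins y t ∈ U
        · have hge : ((t:ℝ):EReal) ≤ g y := le_of_not_gt hlt
          have hle : g y ≤ ((t:ℝ):EReal) := by
            by_contra hc
            push_neg at hc
            obtain ⟨q, hq1, hq2⟩ : ∃ q : ℚ, t < (q:ℝ) ∧ ((q:ℝ):EReal) < g y := by
              obtain ⟨q, hq1, hq2⟩ := EReal.exists_rat_btwn_of_lt hc
              exact ⟨q, by exact_mod_cast hq1, hq2⟩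
            have hqU : ins y (q:ℝ) ∈ U :=
              hU _ _ (hins_mono y y t (q:ℝ) (fun i => le_rfl) hq1.le) hsec
            have hyW : y ∈ W (q:ℝ) := (gW q).2 hqU
            have : g y ≤ ((q:ℝ):EReal) := by
              rw [hgdef]
              exact iInf_le_of_le q (by rw [if_pos hyW])
            exact absurd (lt_of_le_of_lt this hq2) (lt_irrefl _)
          have heq : g y = ((t:ℝ):EReal) := le_antisymm hle hge
          by_cases hd : t ∈ D
          · left
            have hyW : y ∈ W t := (hy.2 t hd).1 hsec
            refine ⟨fun _ => Or.inr ?_, fun _ => hsec⟩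
            exact Set.mem_biUnion hd ⟨⟨hyW, heq⟩, rfl⟩
          · right
            exact ⟨heq.symm, hd⟩
        · left
          constructor
          · intro h; exact absurd h hsec
          · intro hB
            rcases hB with h1 | h2
            · obtain ⟨q, hq1, hq2⟩ := (glt t).1 h1
              exact absurd (hU _ _ (hins_mono y y (q:ℝ) t (fun i => le_rfl) hq1.le) hq2) hsec
            · simp only [Set.mem_iUnion] at h2
              obtain ⟨c, hcD, hmem⟩ := h2
              obtain ⟨⟨hyW, _⟩, htc⟩ := hmem
              have htc' : t = c := htc
              subst htc'
              exact absurd ((hy.2 t hcD).2 hyW) hsec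
    -- conclude
    obtain ⟨Ng, hNgsub, hNgm, hNg0⟩ :
        ∃ Ng, goodᶜ ⊆ Ng ∧ MeasurableSet Ng ∧ π Ng = 0 := by
      refine exists_measurable_superset_of_null ?_
      rw [Set.compl_def]
      exact ae_iff.1 hgood
    set M : Set ((Fin k → ℝ) × ℝ) := {p | ((p.2:ℝ):EReal) = g p.1 ∧ p.2 ∉ D} with hMdef
    have hMm : MeasurableSet M := by
      have h1 : MeasurableSet {p : (Fin k → ℝ) × ℝ | ((p.2:ℝ):EReal) = g p.1} := by
        have hle1 := measurableSet_le (measurable_coe_real_ereal.comp measurable_snd)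
          (hg.comp measurable_fst)
        have hle2 := measurableSet_le (hg.comp measurable_fst)
          (measurable_coe_real_ereal.comp measurable_snd)
        have : {p : (Fin k → ℝ) × ℝ | ((p.2:ℝ):EReal) = g p.1}
            = {p | ((p.2:ℝ):EReal) ≤ g p.1} ∩ {p | g p.1 ≤ ((p.2:ℝ):EReal)} := by
          ext p; simp [le_antisymm_iff]
        rw [this]; exact hle1.inter hle2
      exact h1.inter ((hD.measurableSet.compl).preimage measurable_snd)
    have hM0 : (π.prod ν) M = 0 := by
      rw [Measure.measure_prod_null hMm]
      refine Filter.Eventually.of_forall fun y => ?_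
      by_cases hc : ∃ a : ℝ, ((a:ℝ):EReal) = g y
      · obtain ⟨a, ha⟩ := hc
        refine measure_mono_null (t := {a} \ D) ?_ ?_
        · intro t ht
          obtain ⟨ht1, ht2⟩ := ht
          have : ((t:ℝ):EReal) = ((a:ℝ):EReal) := by rw [ht1, ha]
          have hta : t = a := by exact_mod_cast this
          exact ⟨hta, ht2⟩
        · by_cases hd : a ∈ D
          · refine measure_mono_null (t := (∅ : Set ℝ)) ?_ measure_empty
            intro t ht
            have hta : t = a := ht.1
            exact absurd (hta ▸ hd) ht.2
          · refine measure_mono_null diff_subset ?_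
            have : ν {a} = 0 := by
              by_contra hne
              exact hd hne
            exact this
      · refine measure_mono_null (t := (∅ : Set ℝ)) ?_ measure_empty
        intro t ht
        exact absurd ⟨t, ht.1⟩ hc
    have hdiffsub : (U'' \ B) ∪ (B \ U'') ⊆ (Ng ×ˢ (univ : Set ℝ)) ∪ M := by
      rintro ⟨y, t⟩ hp
      by_cases hyg : y ∈ good
      · rcases hmain y hyg t with hiff | hM
        · exfalso
          rcases hp with h | h
          · exact h.2 (hiff.1 h.1)
          · exact h.2 (hiff.2 h.1)
        · exact Or.inr hM
      · exact Or.inl ⟨hNgsub hyg, trivial⟩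
    have hdiff0 : (π.prod ν) ((U'' \ B) ∪ (B \ U'')) = 0 := by
      refine measure_mono_null hdiffsub (measure_union_null ?_ hM0)
      rw [Measure.prod_prod, hNg0, zero_mul]
    have hU''nm : NullMeasurableSet U'' (π.prod ν) := by
      refine (hBmeas.nullMeasurableSet).congr ?_
      rw [MeasureTheory.ae_eq_set]
      constructor
      · exact measure_mono_null (fun p hp => Or.inr hp) hdiff0
      · exact measure_mono_null (fun p hp => Or.inl hp) hdiff0
    have hpre : U = E ⁻¹' U'' := by
      ext x
      have hEx : E x = (fun j => x ((Fin.last k).succAbove j), x (Fin.last k)) := rfl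
      simp only [Set.mem_preimage, hEx, hU''def, Set.mem_setOf_eq]
      rw [hinsdef]
      simp only []
      rw [show (Fin.last k).insertNth (x (Fin.last k)) (fun j => x ((Fin.last k).succAbove j))
          = x from Fin.insertNth_self_removeNth _ _]
    rw [hpre]
    exact hU''nm.preimage mpE.quasiMeasurePreserving

lemma coord_reduce {N : ℕ} (ν : Measure ℝ) [IsProbabilityMeasure ν] {μ : ℝ}
    (hint : Integrable (fun t : ℝ => t) ν)
    (S : Set (Fin (N+1) → ℝ))
    (hnm : NullMeasurableSet S (Measure.pi fun _ : Fin (N+1) => ν)) (i : Fin (N+1)) :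
    ∃ I : (Fin N → ℝ) → ℝ,
      (∫ x, S.indicator (fun _ => (1:ℝ)) x * (x i - μ) ∂(Measure.pi fun _ : Fin (N+1) => ν)
        = ∫ y, I y ∂(Measure.pi fun _ : Fin N => ν)) ∧
      (∀ᵐ y ∂(Measure.pi fun _ : Fin N => ν), ∃ s : Set ℝ, MeasurableSet s ∧
        s =ᵐ[ν] {t | i.insertNth t y ∈ S} ∧
        I y = ∫ t, s.indicator (fun _ => (1:ℝ)) t * (t - μ) ∂ν) := by
  classical
  set π : Measure (Fin (N+1) → ℝ) := Measure.pi fun _ => ν with hπdef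
  set π' : Measure (Fin N → ℝ) := Measure.pi fun _ => ν with hπ'def
  set e := MeasurableEquiv.piFinSuccAbove (fun _ : Fin (N+1) => ℝ) i with hedef
  set E := e.trans (MeasurableEquiv.prodComm : ℝ × (Fin N → ℝ) ≃ᵐ (Fin N → ℝ) × ℝ) with hEdef
  have mpE : MeasurePreserving E π (π'.prod ν) :=
    (measurePreserving_piFinSuccAbove (fun _ : Fin (N+1) => ν) i).trans
      ⟨measurable_swap, Measure.prod_swap⟩
  have hEsymm : ∀ p : (Fin N → ℝ) × ℝ, E.symm p = i.insertNth p.2 p.1 := fun p => rfl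
  have hEval : ∀ x, (E x).2 = x i := fun x => rfl
  have hEeta : ∀ x, i.insertNth (E x).2 (E x).1 = x := fun x =>
    Fin.insertNth_self_removeNth _ _
  set S' : Set ((Fin N → ℝ) × ℝ) := {p | i.insertNth p.2 p.1 ∈ S} with hS'def
  have hS'pre : S' = E.symm ⁻¹' S := by
    ext p; simp only [Set.mem_preimage, hEsymm p, hS'def, Set.mem_setOf_eq]
  have hS'nm : NullMeasurableSet S' (π'.prod ν) := by
    rw [hS'pre]
    exact hnm.preimage (MeasurePreserving.symm E mpE).quasiMeasurePreserving
  obtain ⟨B, hBm, hBe⟩ := hS'nm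
  have hGint : Integrable
      (fun p : (Fin N → ℝ) × ℝ => B.indicator (fun _ => (1:ℝ)) p * (p.2 - μ)) (π'.prod ν) := by
    have hsnd : MeasurePreserving (Prod.snd) (π'.prod ν) ν :=
      ⟨measurable_snd, by rw [Measure.map_snd_prod]; simp⟩
    have h5 : Integrable (fun p : (Fin N → ℝ) × ℝ => p.2) (π'.prod ν) :=
      (hsnd.integrable_comp hint.aestronglyMeasurable).2 hint
    exact (h5.sub (integrable_const μ)).bdd_mul (c := 1)
      (measurable_const.indicator hBm).aestronglyMeasurable
      (Filter.Eventually.of_forall fun p => by by_cases h : p ∈ B <;> simp [Set.indicator, h])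
  refine ⟨fun y => ∫ t, (Prod.mk y ⁻¹' B).indicator (fun _ => (1:ℝ)) t * (t - μ) ∂ν, ?_, ?_⟩
  · have h1 : ∫ x, S.indicator (fun _ => (1:ℝ)) x * (x i - μ) ∂π
        = ∫ p, S'.indicator (fun _ => (1:ℝ)) p * (p.2 - μ) ∂(π'.prod ν) := by
      rw [← mpE.integral_comp' (fun p => S'.indicator (fun _ => (1:ℝ)) p * (p.2 - μ))]
      refine integral_congr_ae (Filter.Eventually.of_forall fun x => ?_)
      have h3 : ((E x) ∈ S') = (x ∈ S) := by
        show (i.insertNth (E x).2 (E x).1 ∈ S) = (x ∈ S)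
        rw [hEeta x]
      by_cases hx : x ∈ S
      · have hx2 : E x ∈ S' := h3 ▸ hx
        simp [Set.indicator, hx, hx2, hEval x]
      · have hx2 : E x ∉ S' := fun h => hx (h3 ▸ h)
        simp [Set.indicator, hx, hx2, hEval x]
    have h4 : ∫ p, S'.indicator (fun _ => (1:ℝ)) p * (p.2 - μ) ∂(π'.prod ν)
        = ∫ p, B.indicator (fun _ => (1:ℝ)) p * (p.2 - μ) ∂(π'.prod ν) := by
      refine integral_congr_ae ?_
      filter_upwards [hBe] with p hp
      have hp' : (p ∈ S') = (p ∈ B) := hp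
      by_cases h : p ∈ S'
      · have h2 : p ∈ B := hp' ▸ h
        simp [Set.indicator, h, h2]
      · have h2 : p ∉ B := fun hh => h (hp' ▸ hh)
        simp [Set.indicator, h, h2]
    rw [h1, h4, integral_prod _ hGint]
    rfl
  · have hae := Measure.ae_ae_of_ae_prod hBe
    filter_upwards [hae] with y hy
    refine ⟨Prod.mk y ⁻¹' B, measurable_prodMk_left hBm, ?_, rfl⟩
    filter_upwards [hy] with t ht
    exact ht.symm

lemma coord_ge {N : ℕ} (ν : Measure ℝ) [IsProbabilityMeasure ν] {μ : ℝ}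
    (hint : Integrable (fun t : ℝ => t) ν) (hmean : ∫ t, t ∂ν = μ)
    (S : Set (Fin (N+1) → ℝ))
    (hnm : NullMeasurableSet S (Measure.pi fun _ : Fin (N+1) => ν)) (i : Fin (N+1))
    (hray : ∀ (y : Fin N → ℝ) (t t' : ℝ), t ≤ t' → i.insertNth t y ∈ S → i.insertNth t' y ∈ S) :
    0 ≤ ∫ x, S.indicator (fun _ => (1:ℝ)) x * (x i - μ) ∂(Measure.pi fun _ : Fin (N+1) => ν) := by
  obtain ⟨I, hIeq, hIae⟩ := coord_reduce ν hint S hnm i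
  rw [hIeq]
  refine integral_nonneg_of_ae ?_
  filter_upwards [hIae] with y hy
  obtain ⟨s, hsm, hse, hIy⟩ := hy
  rw [hIy]
  exact inner_ray ν hint hmean (fun t t' h ht => hray y t t' h ht) hse

lemma coord_eq {N : ℕ} (ν : Measure ℝ) [IsProbabilityMeasure ν] {μ : ℝ}
    (hint : Integrable (fun t : ℝ => t) ν) (hmean : ∫ t, t ∂ν = μ)
    (S : Set (Fin (N+1) → ℝ))
    (hnm : NullMeasurableSet S (Measure.pi fun _ : Fin (N+1) => ν)) (i : Fin (N+1))
    (hconst : ∀ (y : Fin N → ℝ) (t t' : ℝ), i.insertNth t y ∈ S → i.insertNth t' y ∈ S) :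
    ∫ x, S.indicator (fun _ => (1:ℝ)) x * (x i - μ) ∂(Measure.pi fun _ : Fin (N+1) => ν) = 0 := by
  obtain ⟨I, hIeq, hIae⟩ := coord_reduce ν hint S hnm i
  rw [hIeq]
  have hz : ∀ᵐ y ∂(Measure.pi fun _ : Fin N => ν), I y = 0 := by
    filter_upwards [hIae] with y hy
    obtain ⟨s, hsm, hse, hIy⟩ := hy
    rw [hIy]
    refine inner_const ν hint hmean ?_ hse
    by_cases hex : ∃ t0 : ℝ, i.insertNth t0 y ∈ S
    · obtain ⟨t0, ht0⟩ := hex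
      right
      exact Set.eq_univ_of_forall fun t => hconst y t0 t ht0
    · left
      exact Set.eq_empty_iff_forall_notMem.2 fun t ht => hex ⟨t, ht⟩
  calc ∫ y, I y ∂(Measure.pi fun _ : Fin N => ν)
      = ∫ _, (0:ℝ) ∂(Measure.pi fun _ : Fin N => ν) := integral_congr_ae hz
    _ = 0 := integral_zero _ _

lemma eval_measurePreserving {N : ℕ} (ν : Measure ℝ) [IsProbabilityMeasure ν] (i : Fin (N+1)) :
    MeasurePreserving (fun x : Fin (N+1) → ℝ => x i) (Measure.pi fun _ => ν) ν := by
  set π' : Measure (Fin N → ℝ) := Measure.pi fun _ => ν with hπ'def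
  set e := MeasurableEquiv.piFinSuccAbove (fun _ : Fin (N+1) => ℝ) i with hedef
  set E := e.trans (MeasurableEquiv.prodComm : ℝ × (Fin N → ℝ) ≃ᵐ (Fin N → ℝ) × ℝ) with hEdef
  have mpE : MeasurePreserving E (Measure.pi fun _ : Fin (N+1) => ν) (π'.prod ν) :=
    (measurePreserving_piFinSuccAbove (fun _ : Fin (N+1) => ν) i).trans
      ⟨measurable_swap, Measure.prod_swap⟩
  have hsnd : MeasurePreserving (Prod.snd) (π'.prod ν) ν :=
    ⟨measurable_snd, by rw [Measure.map_snd_prod]; simp⟩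
  have : (fun x : Fin (N+1) → ℝ => x i) = Prod.snd ∘ E := rfl
  rw [this]
  exact hsnd.comp mpE

lemma integrable_eval {N : ℕ} (ν : Measure ℝ) [IsProbabilityMeasure ν]
    (hint : Integrable (fun t : ℝ => t) ν) (i : Fin (N+1)) :
    Integrable (fun x : Fin (N+1) → ℝ => x i) (Measure.pi fun _ => ν) :=
  ((eval_measurePreserving ν i).integrable_comp hint.aestronglyMeasurable).2 hint

lemma integral_eval {N : ℕ} (ν : Measure ℝ) [IsProbabilityMeasure ν] {μ : ℝ}
    (hint : Integrable (fun t : ℝ => t) ν) (hmean : ∫ t, t ∂ν = μ) (i : Fin (N+1)) :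
    ∫ x, x i ∂(Measure.pi fun _ : Fin (N+1) => ν) = μ := by
  have h := (eval_measurePreserving ν i).map_eq
  have h2 := integral_map (φ := fun x : Fin (N+1) → ℝ => x i)
    (μ := Measure.pi fun _ : Fin (N+1) => ν)
    (eval_measurePreserving ν i).measurable.aemeasurable (f := fun t : ℝ => t)
    (by rw [h]; exact measurable_id.aestronglyMeasurable)
  rw [h] at h2
  exact h2.symm.trans hmean



lemma law_pi {Ω : Type*} [MeasureSpace Ω] [IsProbabilityMeasure (ℙ : Measure Ω)]
    (N : ℕ) (σ : ℕ → Ω → ℝ) (hmeas : ∀ i, Measurable (σ i))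
    (hindep : iIndepFun σ ℙ)
    (hident : ∀ i, Measure.map (σ i) ℙ = Measure.map (σ 0) ℙ) :
    Measure.map (fun ω => fun i : Fin (N+1) => σ i ω) ℙ
      = Measure.pi (fun _ : Fin (N+1) => Measure.map (σ 0) ℙ) := by
  classical
  have hΦ : Measurable (fun ω => fun i : Fin (N+1) => σ i ω) :=
    measurable_pi_iff.2 fun i => hmeas i
  have : IsProbabilityMeasure (Measure.map (σ 0) ℙ) :=
    Measure.isProbabilityMeasure_map (hmeas 0).aemeasurable
  refine (Measure.pi_eq fun s hs => ?_).symm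
  rw [Measure.map_apply hΦ (MeasurableSet.univ_pi hs)]
  set sets : ℕ → Set ℝ := fun j => if h : j < N+1 then s ⟨j, h⟩ else Set.univ with hsets
  have hpre : (fun ω => fun i : Fin (N+1) => σ i ω) ⁻¹' (Set.univ.pi s)
      = ⋂ j ∈ Finset.range (N+1), σ j ⁻¹' sets j := by
    ext ω
    simp only [Set.mem_preimage, Set.mem_univ_pi, Set.mem_iInter, Finset.mem_range,
      Set.mem_setOf_eq]
    constructor
    · intro h j hj
      simp only [hsets, dif_pos hj, Set.mem_preimage]
      exact h ⟨j, hj⟩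
    · intro h i
      have h2 := h i.1 i.isLt
      simp only [hsets, dif_pos i.isLt, Set.mem_preimage, Fin.eta] at h2
      exact h2
  rw [hpre]
  rw [hindep.measure_inter_preimage_eq_mul (Finset.range (N+1)) (sets := sets)
    (fun j hj => by
      by_cases h : j < N+1
      · simp only [hsets, dif_pos h]; exact hs _
      · simp only [hsets, dif_neg h]; exact MeasurableSet.univ)]
  rw [← Fin.prod_univ_eq_prod_range (fun j => ℙ (σ j ⁻¹' sets j)) (N+1)]
  refine Finset.prod_congr rfl fun i _ => ?_
  have h1 : sets i.1 = s i := by simp only [hsets, dif_pos i.isLt, Fin.eta]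
  rw [h1, ← hident i, Measure.map_apply (hmeas i) (hs i)]


end ExploitNegAux

open ExploitNegAux

/-- Negative bias under Exploit for a single arm against a fixed environment.
The i.i.d. values `σ 0, σ 1, …` of arm 1 have mean `μ`. The deterministic mapping
`n` gives the number of samples of arm 1 collected by horizon `T` as a function of
the sample path; it satisfies `1 ≤ n ≤ T`, the stopping structure (whether at least
`i+1` samples are collected depends only on the first `i` values), and the Exploit
property (raising one value of the path, keeping all other values fixed, never
decreases the number of collected samples). Then the expected sample mean of the
collected values is at most `μ`. -/
theorem exploit_negative_bias {Ω : Type*} [MeasureSpace Ω]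
    [IsProbabilityMeasure (ℙ : Measure Ω)]
    (T : ℕ) (hT : 1 ≤ T) (μ : ℝ)
    (σ : ℕ → Ω → ℝ) (hmeas : ∀ i, Measurable (σ i))
    (hindep : iIndepFun σ ℙ)
    (hident : ∀ i, Measure.map (σ i) ℙ = Measure.map (σ 0) ℙ)
    (hint : Integrable (σ 0) ℙ) (hmean : ∫ ω, σ 0 ω ∂ℙ = μ)
    (n : (ℕ → ℝ) → ℕ)
    (hn1 : ∀ f, 1 ≤ n f) (hnT : ∀ f, n f ≤ T)
    (hstop : ∀ f g : ℕ → ℝ, ∀ i : ℕ, (∀ j < i, f j = g j) →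
      (i + 1 ≤ n f ↔ i + 1 ≤ n g))
    (hexploit : ∀ f g : ℕ → ℝ, ∀ l : ℕ, (∀ j ≠ l, f j = g j) → f l ≤ g l →
      n f ≤ n g) :
    ∫ ω, (∑ i ∈ Finset.range (n fun i => σ i ω), σ i ω) / (n fun i => σ i ω) ∂ℙ
      ≤ μ := by
  classical
  obtain ⟨N, rfl⟩ : ∃ N, T = N + 1 := ⟨T - 1, (Nat.succ_pred_eq_of_pos hT).symm⟩
  set ν : Measure ℝ := Measure.map (σ 0) ℙ with hνdef
  have hνp : IsProbabilityMeasure ν := Measure.isProbabilityMeasure_map (hmeas 0).aemeasurable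
  have hνint : Integrable (fun t : ℝ => t) ν :=
    (integrable_map_measure (f := σ 0) (g := fun t : ℝ => t)
      measurable_id'.aestronglyMeasurable (hmeas 0).aemeasurable).2 hint
  have hνmean : ∫ t, t ∂ν = μ :=
    (integral_map (φ := σ 0) (hmeas 0).aemeasurable (f := fun t : ℝ => t)
      measurable_id'.aestronglyMeasurable).trans hmean
  set π : Measure (Fin (N+1) → ℝ) := Measure.pi fun _ => ν with hπdef
  set Φ : Ω → (Fin (N+1) → ℝ) := fun ω => fun i : Fin (N+1) => σ i ω with hΦdef
  have hΦm : Measurable Φ := measurable_pi_iff.2 fun i => hmeas i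
  have hlaw : Measure.map Φ ℙ = π := law_pi N σ hmeas hindep hident
  set ev : (Fin (N+1) → ℝ) → (ℕ → ℝ) := fun x j => if h : j < N+1 then x ⟨j, h⟩ else 0
    with hevdef
  set m : (Fin (N+1) → ℝ) → ℕ := fun x => n (ev x) with hmdef
  have hm1 : ∀ x, 1 ≤ m x := fun x => hn1 _
  have hmT : ∀ x, m x ≤ N+1 := fun x => hnT _
  have n_agree : ∀ f g : ℕ → ℝ, (∀ j < N+1, f j = g j) → n f = n g := by
    intro f g hfg
    have key : ∀ f' g' : ℕ → ℝ, (∀ j < N+1, f' j = g' j) → n f' ≤ n g' := by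
      intro f' g' hfg'
      have h1 := hstop f' g' (n f' - 1) (fun j hj => hfg' j (by have := hnT f'; omega))
      have h2 : n f' - 1 + 1 ≤ n f' := by have := hn1 f'; omega
      have h3 := h1.1 h2
      have := hn1 f'
      omega
    exact le_antisymm (key f g hfg) (key g f (fun j hj => (hfg j hj).symm))
  have hev_update : ∀ (x : Fin (N+1) → ℝ) (i : Fin (N+1)) (t : ℝ),
      ev (Function.update x i t) = Function.update (ev x) (i : ℕ) t := by
    intro x i t
    funext j
    by_cases hj : j < N+1
    · by_cases hji : j = (i : ℕ)
      · subst hji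
        have hfin : (⟨(i : ℕ), hj⟩ : Fin (N+1)) = i := Fin.ext rfl
        simp only [hevdef]
        rw [dif_pos hj, hfin, Function.update_self, Function.update_self]
      · have hfin : (⟨j, hj⟩ : Fin (N+1)) ≠ i := fun h => hji (by rw [← h])
        simp only [hevdef, dif_pos hj, Function.update_of_ne hfin,
          Function.update_of_ne hji]
    · have hji : j ≠ (i : ℕ) := fun h => hj (h ▸ i.isLt)
      simp only [hevdef, dif_neg hj, Function.update_of_ne hji]
  have hmono_single : ∀ (x : Fin (N+1) → ℝ) (i : Fin (N+1)) (t t' : ℝ), t ≤ t' →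
      m (Function.update x i t) ≤ m (Function.update x i t') := by
    intro x i t t' htt
    refine hexploit _ _ (i : ℕ) ?_ ?_
    · intro j hji
      rw [hev_update, hev_update, Function.update_of_ne hji, Function.update_of_ne hji]
    · rw [hev_update, hev_update, Function.update_self, Function.update_self]
      exact htt
  have hmono : ∀ x y : Fin (N+1) → ℝ, (∀ i, x i ≤ y i) → m x ≤ m y := by
    intro x y hxy
    have H : ∀ s : Finset (Fin (N+1)), m x ≤ m (fun i => if i ∈ s then y i else x i) := by
      intro s
      induction s using Finset.induction with
      | empty => simpa using le_refl (m x)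
      | @insert j s hj ih =>
        have h1 : (fun i => if i ∈ insert j s then y i else x i)
            = Function.update (fun i => if i ∈ s then y i else x i) j (y j) := by
          funext i
          by_cases hij : i = j
          · subst hij; simp [hj]
          · simp [Function.update_of_ne hij, hij]
        have h2 : (fun i => if i ∈ s then y i else x i)
            = Function.update (fun i => if i ∈ s then y i else x i) j (x j) := by
          funext i
          by_cases hij : i = j
          · subst hij; simp [hj]
          · simp [Function.update_of_ne hij]
        calc m x ≤ m (fun i => if i ∈ s then y i else x i) := ih
          _ = m (Function.update (fun i => if i ∈ s then y i else x i) j (x j)) := by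
              rw [← h2]
          _ ≤ m (Function.update (fun i => if i ∈ s then y i else x i) j (y j)) :=
              hmono_single _ _ _ _ (hxy j)
          _ = m (fun i => if i ∈ insert j s then y i else x i) := by rw [← h1]
    have hH := H Finset.univ
    simpa using hH
  set U : ℕ → Set (Fin (N+1) → ℝ) := fun k => {x | k ≤ m x} with hUdef
  have hUnm : ∀ k, NullMeasurableSet (U k) π :=
    fun k => nullMeasurableSet_upper (N+1) ν hνp (U k)
      (fun x y hxy hx => le_trans hx (hmono x y hxy))
  have hUray : ∀ (k : ℕ) (i : Fin (N+1)) (y : Fin N → ℝ) (t t' : ℝ), t ≤ t' →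
      i.insertNth t y ∈ U k → i.insertNth t' y ∈ U k := by
    intro k i y t t' htt h
    have e1 : Function.update (i.insertNth t y : Fin (N+1) → ℝ) i t' = (i.insertNth t' y : Fin (N+1) → ℝ) :=
      Fin.update_insertNth (α := fun _ : Fin (N+1) => ℝ) _ _ _ _
    have e2 : Function.update (i.insertNth t y : Fin (N+1) → ℝ) i t = (i.insertNth t y : Fin (N+1) → ℝ) :=
      Fin.update_insertNth (α := fun _ : Fin (N+1) => ℝ) _ _ _ _
    have h2 : m (i.insertNth t y) ≤ m (i.insertNth t' y) := by
      calc m (i.insertNth t y) = m (Function.update (i.insertNth t y) i t) := by rw [e2]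
        _ ≤ m (Function.update (i.insertNth t y) i t') := hmono_single _ _ _ _ htt
        _ = m (i.insertNth t' y) := by rw [e1]
    exact le_trans h h2
  set A : ℕ → (Fin (N+1) → ℝ) → ℝ := fun k x => (∑ j ∈ Finset.range k, ev x j) / k
    with hAdef
  have htel : ∀ x, A (m x) x
      = A 1 x + ∑ k ∈ Finset.Ico 1 (N+1),
          (U (k+1)).indicator (fun _ => (1:ℝ)) x * (A (k+1) x - A k x) := by
    intro x
    have hfilter : (Finset.Ico 1 (N+1)).filter (fun k => x ∈ U (k+1)) = Finset.Ico 1 (m x) := by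
      ext k
      simp only [Finset.mem_filter, Finset.mem_Ico, hUdef, Set.mem_setOf_eq]
      have h1 := hm1 x; have h2 := hmT x
      omega
    have hsum : ∑ k ∈ Finset.Ico 1 (N+1),
        (U (k+1)).indicator (fun _ => (1:ℝ)) x * (A (k+1) x - A k x)
        = ∑ k ∈ Finset.Ico 1 (m x), (A (k+1) x - A k x) := by
      calc ∑ k ∈ Finset.Ico 1 (N+1),
            (U (k+1)).indicator (fun _ => (1:ℝ)) x * (A (k+1) x - A k x)
          = ∑ k ∈ Finset.Ico 1 (N+1), if x ∈ U (k+1) then A (k+1) x - A k x else 0 :=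
            Finset.sum_congr rfl fun k _ => by
              by_cases h : x ∈ U (k+1) <;> simp [Set.indicator, h]
        _ = ∑ k ∈ (Finset.Ico 1 (N+1)).filter (fun k => x ∈ U (k+1)),
              (A (k+1) x - A k x) := (Finset.sum_filter _ _).symm
        _ = ∑ k ∈ Finset.Ico 1 (m x), (A (k+1) x - A k x) := by rw [hfilter]
    rw [hsum]
    have htele : ∑ k ∈ Finset.Ico 1 (m x), (A (k+1) x - A k x) = A (m x) x - A 1 x := by
      rw [Finset.sum_Ico_eq_sub _ (hm1 x),
        Finset.sum_range_sub (fun k => A k x), Finset.sum_range_sub (fun k => A k x)]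
      ring
    rw [htele]
    ring
  have hpoint : ∀ ω, (∑ i ∈ Finset.range (n fun i => σ i ω), σ i ω) / (n fun i => σ i ω)
      = A (m (Φ ω)) (Φ ω) := by
    intro ω
    have hagree : ∀ j, j < N+1 → ev (Φ ω) j = σ j ω := by
      intro j hj
      simp only [hevdef, dif_pos hj, hΦdef]
    have hn : m (Φ ω) = n (fun i => σ i ω) := n_agree _ _ (fun j hj => hagree j hj)
    rw [hAdef]
    simp only [hn]
    congr 1
    refine Finset.sum_congr rfl fun j hj => ?_
    rw [Finset.mem_range] at hj
    exact (hagree j (lt_of_lt_of_le hj (hnT _))).symm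
  have hex : ∀ k : ℕ, ∃ Bk : Set (Fin (N+1) → ℝ), MeasurableSet Bk ∧ U (k+1) =ᵐ[π] Bk := by
    intro k; obtain ⟨Bk, h1, h2⟩ := hUnm (k+1); exact ⟨Bk, h1, h2⟩
  choose B hBm hBe using hex
  have hevm : ∀ j : ℕ, Measurable fun x : Fin (N+1) → ℝ => ev x j := by
    intro j
    by_cases hj : j < N+1
    · simp only [hevdef, dif_pos hj]; exact measurable_pi_apply _
    · simp only [hevdef, dif_neg hj]; exact measurable_const
  have hevi : ∀ j : ℕ, Integrable (fun x => ev x j) π := by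
    intro j
    by_cases hj : j < N+1
    · simp only [hevdef, dif_pos hj]
      exact integrable_eval ν hνint ⟨j, hj⟩
    · simp only [hevdef, dif_neg hj]; exact integrable_const 0
  have hAm : ∀ k, Measurable (A k) := by
    intro k
    simp only [hAdef]
    exact (Finset.measurable_sum _ fun j _ => hevm j).div_const _
  have hAint : ∀ k, Integrable (A k) π := by
    intro k
    simp only [hAdef]
    exact (integrable_finset_sum _ fun j _ => hevi j).div_const _
  set F' : (Fin (N+1) → ℝ) → ℝ := fun x => A 1 x + ∑ k ∈ Finset.Ico 1 (N+1),
      (B k).indicator (fun _ => (1:ℝ)) x * (A (k+1) x - A k x) with hF'def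
  have hindbd : ∀ (s : Set (Fin (N+1) → ℝ)), ∃ C, ∀ x,
      ‖s.indicator (fun _ => (1:ℝ)) x‖ ≤ C := by
    intro s
    exact ⟨1, fun x => by by_cases h : x ∈ s <;> simp [Set.indicator, h]⟩
  have hterm_int : ∀ k, Integrable
      (fun x => (B k).indicator (fun _ => (1:ℝ)) x * (A (k+1) x - A k x)) π := by
    intro k
    exact ((hAint (k+1)).sub (hAint k)).bdd_mul
      (measurable_const.indicator (hBm k)).aestronglyMeasurable (Filter.Eventually.of_forall (hindbd _).choose_spec)
  have hF'm : Measurable F' := by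
    simp only [hF'def]
    exact (hAm 1).add <| Finset.measurable_sum _ fun k _ =>
      (measurable_const.indicator (hBm k)).mul ((hAm (k+1)).sub (hAm k))
  have hF'int : Integrable F' π := by
    simp only [hF'def]
    exact (hAint 1).add (integrable_finset_sum _ fun k _ => hterm_int k)
  have haeeq : (fun x => A (m x) x) =ᵐ[π] F' := by
    have hall : ∀ᵐ x ∂π, ∀ k : ℕ, (x ∈ U (k+1)) = (x ∈ B k) :=
      ae_all_iff.2 fun k => hBe k
    filter_upwards [hall] with x hx
    rw [htel x, hF'def]
    congr 1
    refine Finset.sum_congr rfl fun k hk => ?_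
    have h := hx k
    by_cases hxk : x ∈ U (k+1)
    · have h2 : x ∈ B k := h ▸ hxk
      simp [Set.indicator, hxk, h2]
    · have h2 : x ∉ B k := fun hh => hxk (h ▸ hh)
      simp [Set.indicator, hxk, h2]
  obtain ⟨Nx, hNsub, hNm, hN0⟩ := exists_measurable_superset_of_null (ae_iff.1 haeeq)
  have hpre0 : ℙ (Φ ⁻¹' Nx) = 0 := by
    rw [← hlaw] at hN0
    rw [← Measure.map_apply hΦm hNm]
    exact hN0
  have hae2 : ∀ᵐ ω ∂ℙ, A (m (Φ ω)) (Φ ω) = F' (Φ ω) := by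
    rw [ae_iff]
    refine measure_mono_null ?_ hpre0
    intro ω hω
    exact hNsub hω
  have hstep1 : ∫ ω, (∑ i ∈ Finset.range (n fun i => σ i ω), σ i ω) / (n fun i => σ i ω) ∂ℙ
      = ∫ x, F' x ∂π := by
    calc ∫ ω, (∑ i ∈ Finset.range (n fun i => σ i ω), σ i ω) / (n fun i => σ i ω) ∂ℙ
        = ∫ ω, F' (Φ ω) ∂ℙ := by
          refine integral_congr_ae ?_
          filter_upwards [hae2] with ω hω
          rw [hpoint ω, hω]
      _ = ∫ x, F' x ∂π := by
          rw [← hlaw, integral_map hΦm.aemeasurable hF'm.aestronglyMeasurable]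
  have hsplit : ∫ x, F' x ∂π = (∫ x, A 1 x ∂π) + ∑ k ∈ Finset.Ico 1 (N+1),
      ∫ x, (B k).indicator (fun _ => (1:ℝ)) x * (A (k+1) x - A k x) ∂π := by
    rw [hF'def]
    rw [integral_add (hAint 1) (integrable_finset_sum _ fun k _ => hterm_int k),
      integral_finset_sum _ (fun k _ => hterm_int k)]
  have hA1 : ∫ x, A 1 x ∂π = μ := by
    have hA1eq : A 1 = fun x : Fin (N+1) → ℝ => x ⟨0, Nat.succ_pos N⟩ := by
      funext x
      simp [hAdef, hevdef]
    rw [hA1eq]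
    exact integral_eval ν hνint hνmean _
  have hterm_le : ∀ k ∈ Finset.Ico 1 (N+1),
      ∫ x, (B k).indicator (fun _ => (1:ℝ)) x * (A (k+1) x - A k x) ∂π ≤ 0 := by
    intro k hk
    rw [Finset.mem_Ico] at hk
    obtain ⟨hk1, hk2⟩ := hk
    have hkN : k < N+1 := by omega
    have hk0 : (k:ℝ) ≠ 0 := Nat.cast_ne_zero.2 (by omega)
    have hdiff : ∀ x, A (k+1) x - A k x
        = (∑ j ∈ Finset.range k, (ev x k - ev x j)) / ((k:ℝ) * ((k:ℝ)+1)) := by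
      intro x
      simp only [hAdef]
      rw [Finset.sum_range_succ, Finset.sum_sub_distrib, Finset.sum_const, Finset.card_range]
      have hcast : ((k+1 : ℕ) : ℝ) = (k:ℝ)+1 := by push_cast; ring
      rw [hcast]
      have hk10 : ((k:ℝ)+1) ≠ 0 := by positivity
      field_simp
      ring
    have hjint : ∀ j : ℕ, Integrable
        (fun x => (B k).indicator (fun _ => (1:ℝ)) x * (ev x k - ev x j)) π :=
      fun j => ((hevi k).sub (hevi j)).bdd_mul
        (measurable_const.indicator (hBm k)).aestronglyMeasurable (Filter.Eventually.of_forall (hindbd _).choose_spec)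
    have hIeq : ∫ x, (B k).indicator (fun _ => (1:ℝ)) x * (A (k+1) x - A k x) ∂π
        = ((k:ℝ) * ((k:ℝ)+1))⁻¹ * ∑ j ∈ Finset.range k,
            ∫ x, (B k).indicator (fun _ => (1:ℝ)) x * (ev x k - ev x j) ∂π := by
      calc ∫ x, (B k).indicator (fun _ => (1:ℝ)) x * (A (k+1) x - A k x) ∂π
          = ∫ x, ∑ j ∈ Finset.range k, ((k:ℝ) * ((k:ℝ)+1))⁻¹ *
              ((B k).indicator (fun _ => (1:ℝ)) x * (ev x k - ev x j)) ∂π := by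
            refine integral_congr_ae (Filter.Eventually.of_forall fun x => ?_)
            beta_reduce
            rw [hdiff x]
            rw [show ∑ j ∈ Finset.range k, ((k:ℝ) * ((k:ℝ)+1))⁻¹ *
                ((B k).indicator (fun _ => (1:ℝ)) x * (ev x k - ev x j))
              = ((k:ℝ) * ((k:ℝ)+1))⁻¹ * ((B k).indicator (fun _ => (1:ℝ)) x *
                  ∑ j ∈ Finset.range k, (ev x k - ev x j)) from by
              rw [← Finset.mul_sum, ← Finset.mul_sum]]
            ring
        _ = ∑ j ∈ Finset.range k, ∫ x, ((k:ℝ) * ((k:ℝ)+1))⁻¹ *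
              ((B k).indicator (fun _ => (1:ℝ)) x * (ev x k - ev x j)) ∂π :=
            integral_finset_sum _ (fun j _ => (hjint j).const_mul _)
        _ = ∑ j ∈ Finset.range k, ((k:ℝ) * ((k:ℝ)+1))⁻¹ *
              ∫ x, (B k).indicator (fun _ => (1:ℝ)) x * (ev x k - ev x j) ∂π :=
            Finset.sum_congr rfl fun j _ => integral_const_mul _ _
        _ = ((k:ℝ) * ((k:ℝ)+1))⁻¹ * ∑ j ∈ Finset.range k,
              ∫ x, (B k).indicator (fun _ => (1:ℝ)) x * (ev x k - ev x j) ∂π := by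
            rw [Finset.mul_sum]
    have hBU : ∀ (i : Fin (N+1)),
        ∫ x, (B k).indicator (fun _ => (1:ℝ)) x * (x i - μ) ∂π
        = ∫ x, (U (k+1)).indicator (fun _ => (1:ℝ)) x * (x i - μ) ∂π := by
      intro i
      refine integral_congr_ae ?_
      filter_upwards [hBe k] with x hx
      have hx' : (x ∈ U (k+1)) = (x ∈ B k) := hx
      by_cases h : x ∈ U (k+1)
      · have h2 : x ∈ B k := hx' ▸ h
        simp [Set.indicator, h, h2]
      · have h2 : x ∉ B k := fun hh => h (hx' ▸ hh)
        simp [Set.indicator, h, h2]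
    have hconstk : ∀ (y : Fin N → ℝ) (t t' : ℝ),
        (⟨k, hkN⟩ : Fin (N+1)).insertNth t y ∈ U (k+1) →
        (⟨k, hkN⟩ : Fin (N+1)).insertNth t' y ∈ U (k+1) := by
      intro y t t' h
      have hagree : ∀ jj, jj < k →
          ev ((⟨k, hkN⟩ : Fin (N+1)).insertNth t y) jj
          = ev ((⟨k, hkN⟩ : Fin (N+1)).insertNth t' y) jj := by
        intro jj hjj
        have hjjN : jj < N+1 := by omega
        have hne : (⟨jj, hjjN⟩ : Fin (N+1)) ≠ ⟨k, hkN⟩ := by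
          intro hcon
          have : jj = k := by
            have := congrArg Fin.val hcon
            simpa using this
          omega
        simp only [hevdef, dif_pos hjjN]
        have hupd : Function.update ((⟨k, hkN⟩ : Fin (N+1)).insertNth t y : Fin (N+1) → ℝ) ⟨k, hkN⟩ t'
            = ((⟨k, hkN⟩ : Fin (N+1)).insertNth t' y : Fin (N+1) → ℝ) :=
          Fin.update_insertNth (α := fun _ : Fin (N+1) => ℝ) _ _ _ _
        rw [← hupd, Function.update_of_ne hne]
      have hiff := hstop (ev ((⟨k, hkN⟩ : Fin (N+1)).insertNth t y))
        (ev ((⟨k, hkN⟩ : Fin (N+1)).insertNth t' y)) k hagree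
      exact hiff.1 h
    have hj_le : ∀ j ∈ Finset.range k,
        ∫ x, (B k).indicator (fun _ => (1:ℝ)) x * (ev x k - ev x j) ∂π ≤ 0 := by
      intro j hj
      rw [Finset.mem_range] at hj
      have hjN : j < N+1 := by omega
      have hevk : ∀ x : Fin (N+1) → ℝ, ev x k = x ⟨k, hkN⟩ := fun x => by
        simp only [hevdef, dif_pos hkN]
      have hevj : ∀ x : Fin (N+1) → ℝ, ev x j = x ⟨j, hjN⟩ := fun x => by
        simp only [hevdef, dif_pos hjN]
      have hsplit2 : ∫ x, (B k).indicator (fun _ => (1:ℝ)) x * (ev x k - ev x j) ∂π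
          = (∫ x, (B k).indicator (fun _ => (1:ℝ)) x * (x ⟨k, hkN⟩ - μ) ∂π)
            - ∫ x, (B k).indicator (fun _ => (1:ℝ)) x * (x ⟨j, hjN⟩ - μ) ∂π := by
        have hi1 : Integrable (fun x => (B k).indicator (fun _ => (1:ℝ)) x *
            (x ⟨k, hkN⟩ - μ)) π :=
          ((integrable_eval ν hνint _).sub (integrable_const μ)).bdd_mul
            (measurable_const.indicator (hBm k)).aestronglyMeasurable (Filter.Eventually.of_forall (hindbd _).choose_spec)
        have hi2 : Integrable (fun x => (B k).indicator (fun _ => (1:ℝ)) x *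
            (x ⟨j, hjN⟩ - μ)) π :=
          ((integrable_eval ν hνint _).sub (integrable_const μ)).bdd_mul
            (measurable_const.indicator (hBm k)).aestronglyMeasurable (Filter.Eventually.of_forall (hindbd _).choose_spec)
        rw [← integral_sub hi1 hi2]
        refine integral_congr_ae (Filter.Eventually.of_forall fun x => ?_)
        beta_reduce
        rw [hevk x, hevj x]
        ring
      rw [hsplit2, hBU ⟨k, hkN⟩, hBU ⟨j, hjN⟩]
      have h1 : ∫ x, (U (k+1)).indicator (fun _ => (1:ℝ)) x * (x ⟨k, hkN⟩ - μ) ∂π = 0 :=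
        coord_eq ν hνint hνmean (U (k+1)) (hUnm (k+1)) ⟨k, hkN⟩ hconstk
      have h2 : 0 ≤ ∫ x, (U (k+1)).indicator (fun _ => (1:ℝ)) x * (x ⟨j, hjN⟩ - μ) ∂π :=
        coord_ge ν hνint hνmean (U (k+1)) (hUnm (k+1)) ⟨j, hjN⟩ (hUray (k+1) _)
      linarith
    rw [hIeq]
    have hsum_le : ∑ j ∈ Finset.range k,
        ∫ x, (B k).indicator (fun _ => (1:ℝ)) x * (ev x k - ev x j) ∂π ≤ 0 :=
      Finset.sum_nonpos hj_le
    have hc : (0:ℝ) ≤ ((k:ℝ) * ((k:ℝ)+1))⁻¹ := by positivity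
    exact mul_nonpos_iff.2 (Or.inl ⟨hc, hsum_le⟩)
  rw [hstep1, hsplit, hA1]
  have hfin : ∑ k ∈ Finset.Ico 1 (N+1),
      ∫ x, (B k).indicator (fun _ => (1:ℝ)) x * (A (k+1) x - A k x) ∂π ≤ 0 :=
    Finset.sum_nonpos hterm_le
  linarith
end
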